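/- The integer distances from the origin to the planes spanned by the tetrahedra T11, T12, T13, T14, T15, T16, T17 equal 4, 3, 2, 4, 3, 2, 1 respectively: for each tetrahedron T1m with corresponding value d_m in (4,3,2,4,3,2,1), there exists an integer linear functional f on ℤ^4, given by a coefficient vector in ℤ^4 whose entries have greatest common divisor 1, such that f(P) = d_m for every vertex P of T1m. -/
import Mathlib


open Matrix Polynomial

def A1 : Matrix (Fin 4) (Fin 4) ℚ :=
  !![0, 1, 0, 0; 0, 0, 1, 0; 0, 0, 0, 1; 1, -3, 0, 4]

noncomputable def B11 : Matrix (Fin 4) (Fin 4) ℚ := (A1 ^ 2)⁻¹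
noncomputable def B12 : Matrix (Fin 4) (Fin 4) ℚ := (A1 - 1) ^ 2 * (A1 ^ 2)⁻¹
noncomputable def B13 : Matrix (Fin 4) (Fin 4) ℚ := (A1 - 1) ^ 2 * (A1 + 1) * (A1 ^ 2)⁻¹

def V10 : Fin 4 → ℚ := ![-3, -2, -1, 1]

/-- `V i j k` is the point `B11^i * B12^j * B13^k` applied to `V10`;
the paper's vertex `V_{1,4i+2j+k}`. -/
noncomputable def V (i j k : ℕ) : Fin 4 → ℚ := (B11 ^ i * B12 ^ j * B13 ^ k).mulVec V10

/-- The plane through `P0 P1 P2 P3` lies at integer distance `d` from the origin: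
there is a primitive integer linear functional taking value `d` at all four points. -/
def AtIntegerDistance (d : ℤ) (P0 P1 P2 P3 : Fin 4 → ℚ) : Prop :=
  ∃ f : Fin 4 → ℤ, Finset.univ.gcd f = 1 ∧
    (∑ i, (f i : ℚ) * P0 i = (d : ℚ)) ∧
    (∑ i, (f i : ℚ) * P1 i = (d : ℚ)) ∧
    (∑ i, (f i : ℚ) * P2 i = (d : ℚ)) ∧
    (∑ i, (f i : ℚ) * P3 i = (d : ℚ))

def B11' : Matrix (Fin 4) (Fin 4) ℚ := !![9,-4,-11,3; 3,0,-4,1; 1,0,0,0; 0,1,0,0]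

lemma hB11 : B11 = B11' := by
  rw [B11]
  apply inv_eq_right_inv
  show A1 ^ 2 * B11' = 1
  rw [pow_two]
  ext i j
  fin_cases i <;> fin_cases j <;>
    simp [A1, B11', Matrix.mul_apply, Fin.sum_univ_four, Matrix.one_apply, Matrix.vecHead, Matrix.vecTail] <;> norm_num

lemma hB12 : B12 = !![4,-4,-3,1; 1,1,-4,1; 1,-2,1,0; 0,1,-2,1] := by
  have : B12 = (A1 - 1) ^ 2 * B11 := rfl
  rw [this, hB11, pow_two]
  ext i j
  fin_cases i <;> fin_cases j <;>
    simp [A1, B11', Matrix.mul_apply, Fin.sum_univ_four, Matrix.one_apply, Matrix.vecHead, Matrix.vecTail] <;> norm_num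

lemma hB13 : B13 = !![5,-3,-7,2; 2,-1,-3,1; 1,-1,-1,1; 1,-2,-1,3] := by
  have : B13 = (A1 - 1) ^ 2 * (A1 + 1) * B11 := rfl
  rw [this, hB11, pow_two]
  ext i j
  fin_cases i <;> fin_cases j <;>
    simp [A1, B11', Matrix.mul_apply, Fin.sum_univ_four, Matrix.one_apply, Matrix.vecHead, Matrix.vecTail] <;> norm_num

lemma hV000 : V 0 0 0 = ![-3, -2, -1, 1] := by
  funext x; fin_cases x <;>
    simp [V, hB11, hB12, hB13, B11', V10, Matrix.mulVec, dotProduct,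
      Fin.sum_univ_four, Matrix.vecHead, Matrix.vecTail] <;> norm_num

lemma hV001 : V 0 0 1 = ![0, 0, 1, 5] := by
  funext x; fin_cases x <;>
    simp [V, hB11, hB12, hB13, B11', V10, Matrix.mulVec, dotProduct,
      Fin.sum_univ_four, Matrix.vecHead, Matrix.vecTail] <;> norm_num

lemma hV010 : V 0 1 0 = ![0, 0, 0, 1] := by
  funext x; fin_cases x <;>
    simp [V, hB11, hB12, hB13, B11', V10, Matrix.mulVec, dotProduct,
      Fin.sum_univ_four, Matrix.vecHead, Matrix.vecTail] <;> norm_num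

lemma hV011 : V 0 1 1 = ![2, 1, 1, 3] := by
  funext x; fin_cases x <;>
    simp [V, hB11, hB12, hB13, B11', V10, Matrix.mulVec, Matrix.mul_apply, dotProduct,
      Fin.sum_univ_four, Matrix.vecHead, Matrix.vecTail] <;> norm_num

lemma hV100 : V 1 0 0 = ![-5, -4, -3, -2] := by
  funext x; fin_cases x <;>
    simp [V, hB11, hB12, hB13, B11', V10, Matrix.mulVec, dotProduct,
      Fin.sum_univ_four, Matrix.vecHead, Matrix.vecTail] <;> norm_num

lemma hV101 : V 1 0 1 = ![4, 1, 0, 0] := by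
  funext x; fin_cases x <;>
    simp [V, hB11, hB12, hB13, B11', V10, Matrix.mulVec, Matrix.mul_apply, dotProduct,
      Fin.sum_univ_four, Matrix.vecHead, Matrix.vecTail] <;> norm_num

lemma hV110 : V 1 1 0 = ![3, 1, 0, 0] := by
  funext x; fin_cases x <;>
    simp [V, hB11, hB12, hB13, B11', V10, Matrix.mulVec, Matrix.mul_apply, dotProduct,
      Fin.sum_univ_four, Matrix.vecHead, Matrix.vecTail] <;> norm_num

lemma hV111 : V 1 1 1 = ![12, 5, 2, 1] := by
  funext x; fin_cases x <;>
    simp [V, hB11, hB12, hB13, B11', V10, Matrix.mulVec, Matrix.mul_apply, dotProduct,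
      Fin.sum_univ_four, Matrix.vecHead, Matrix.vecTail] <;> norm_num

theorem statement6 :
    AtIntegerDistance 4 (V 0 0 0) (V 0 1 0) (V 1 0 0) (V 1 0 1) ∧
    AtIntegerDistance 3 (V 0 1 0) (V 1 0 0) (V 1 0 1) (V 1 1 0) ∧
    AtIntegerDistance 2 (V 0 1 0) (V 1 0 1) (V 1 1 0) (V 1 1 1) ∧
    AtIntegerDistance 4 (V 0 1 0) (V 0 1 1) (V 1 0 1) (V 1 1 1) ∧
    AtIntegerDistance 3 (V 0 0 0) (V 0 1 0) (V 0 1 1) (V 1 0 1) ∧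
    AtIntegerDistance 2 (V 0 0 0) (V 0 0 1) (V 0 1 1) (V 1 0 1) ∧
    AtIntegerDistance 1 (V 0 0 0) (V 0 0 1) (V 0 1 0) (V 0 1 1) := by
  rw [hV000, hV001, hV010, hV011, hV100, hV101, hV110, hV111]
  refine ⟨⟨![-1,8,-13,4], by decide, ?_, ?_, ?_, ?_⟩,
         ⟨![0,3,-7,3], by decide, ?_, ?_, ?_, ?_⟩,
         ⟨![0,2,-5,2], by decide, ?_, ?_, ?_, ?_⟩,
         ⟨![-1,8,-14,4], by decide, ?_, ?_, ?_, ?_⟩,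
         ⟨![-1,7,-11,3], by decide, ?_, ?_, ?_, ?_⟩,
         ⟨![-2,10,-13,3], by decide, ?_, ?_, ?_, ?_⟩,
         ⟨![0,2,-4,1], by decide, ?_, ?_, ?_, ?_⟩⟩ <;>
    simp [Fin.sum_univ_four] <;> norm_num
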